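/- Let θ, φ : [0,1] → ℝ be continuously differentiable, with θ not identically zero, the zero set of φ consisting of at most isolated points, and such that C_{θ,φ} is a copula (conditions (a)–(d)). Then C_{θ,φ} is totally positive of order 2, i.e. C_{θ,φ}(u₁,v₁)·C_{θ,φ}(u₂,v₂) − C_{θ,φ}(u₁,v₂)·C_{θ,φ}(u₂,v₁) ≥ 0 for all 0 ≤ u₁ ≤ u₂ ≤ 1 and 0 ≤ v₁ ≤ v₂ ≤ 1 (left corner set decreasing), if and only if the map u ↦ C_{θ,φ}(u,v)/u is non-increasing on (0,1] for every v ∈ [0,1] (left tail decreasing). -/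

import Mathlib

open Set Filter Topology

/-- A bivariate copula on `[0,1]²`, given as a function `ℝ → ℝ → ℝ`. -/
def IsCopula (C : ℝ → ℝ → ℝ) : Prop :=
  (∀ u ∈ Set.Icc (0:ℝ) 1, C u 0 = 0 ∧ C 0 u = 0) ∧
  (∀ u ∈ Set.Icc (0:ℝ) 1, C u 1 = u ∧ C 1 u = u) ∧
  (∀ u₁ u₂ v₁ v₂ : ℝ, 0 ≤ u₁ → u₁ ≤ u₂ → u₂ ≤ 1 → 0 ≤ v₁ → v₁ ≤ v₂ → v₂ ≤ 1 →
    C u₂ v₂ - C u₂ v₁ - C u₁ v₂ + C u₁ v₁ ≥ 0)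

namespace Stmt9Aux

def Cf (θ φ : ℝ → ℝ) (u v : ℝ) : ℝ := u * v + θ (max u v) * φ u * φ v

variable {θ φ : ℝ → ℝ}

def LTD (θ φ : ℝ → ℝ) : Prop :=
  ∀ v ∈ Set.Icc (0:ℝ) 1, AntitoneOn (fun u => Cf θ φ u v / u) (Set.Ioc 0 1)

def tp2 (θ φ : ℝ → ℝ) (u₁ u₂ v₁ v₂ : ℝ) : Prop :=
  Cf θ φ u₁ v₂ * Cf θ φ u₂ v₁ ≤ Cf θ φ u₁ v₁ * Cf θ φ u₂ v₂

lemma Cf_symm (u v : ℝ) : Cf θ φ u v = Cf θ φ v u := by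
  unfold Cf; rw [max_comm]; ring

lemma Cf_nonneg (hC : IsCopula (Cf θ φ)) {u v : ℝ} (hu : u ∈ Icc (0:ℝ) 1)
    (hv : v ∈ Icc (0:ℝ) 1) : 0 ≤ Cf θ φ u v := by
  have h := hC.2.2 0 u 0 v le_rfl hu.1 hu.2 le_rfl hv.1 hv.2
  have z1 := (hC.1 v hv).2
  have z2 := (hC.1 u hu).1
  have z3 := (hC.1 0 (by norm_num)).1
  linarith

lemma Cf_mono_u (hC : IsCopula (Cf θ φ)) {u u' v : ℝ} (hu : 0 ≤ u) (huu' : u ≤ u')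
    (hu' : u' ≤ 1) (hv : v ∈ Icc (0:ℝ) 1) : Cf θ φ u v ≤ Cf θ φ u' v := by
  have h := hC.2.2 u u' 0 v hu huu' hu' le_rfl hv.1 hv.2
  have z1 := (hC.1 u' ⟨le_trans hu huu', hu'⟩).1
  have z2 := (hC.1 u ⟨hu, le_trans huu' hu'⟩).1
  linarith

lemma Cf_mono_v (hC : IsCopula (Cf θ φ)) {u v v' : ℝ} (hv : 0 ≤ v) (hvv' : v ≤ v')
    (hv' : v' ≤ 1) (hu : u ∈ Icc (0:ℝ) 1) : Cf θ φ u v ≤ Cf θ φ u v' := by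
  rw [Cf_symm u v, Cf_symm u v']
  exact Cf_mono_u hC hv hvv' hv' hu

lemma L1 (hC : IsCopula (Cf θ φ)) (hL : LTD θ φ) {t : ℝ} (ht0 : 0 < t) (ht1 : t ≤ 1) :
    0 ≤ θ t * φ t ^ 2 := by
  have h := hL t ⟨ht0.le, ht1⟩ ⟨ht0, ht1⟩ (⟨one_pos, le_rfl⟩ : (1:ℝ) ∈ Ioc (0:ℝ) 1) ht1
  have e1 : Cf θ φ 1 t = t := (hC.2.1 t ⟨ht0.le, ht1⟩).2
  have h2 : Cf θ φ 1 t / 1 ≤ Cf θ φ t t / t := h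
  rw [e1, div_le_div_iff₀ one_pos ht0] at h2
  have e2 : Cf θ φ t t = t * t + θ t * φ t ^ 2 := by
    unfold Cf; rw [max_self]; ring
  rw [e2] at h2; linarith

lemma P2 (hL : LTD θ φ) {u u' v : ℝ} (hu : 0 < u) (huu' : u ≤ u') (hu'v : u' ≤ v)
    (hv : v ≤ 1) : 0 ≤ θ v * φ v * (u' * φ u - u * φ u') := by
  have hu' : 0 < u' := lt_of_lt_of_le hu huu'
  have h := hL v ⟨le_trans hu.le (le_trans huu' hu'v), hv⟩
    ⟨hu, le_trans (le_trans huu' hu'v) hv⟩ ⟨hu', le_trans hu'v hv⟩ huu'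
  have h2 : Cf θ φ u' v / u' ≤ Cf θ φ u v / u := h
  rw [div_le_div_iff₀ hu' hu] at h2
  have e1 : Cf θ φ u v = u * v + θ v * φ u * φ v := by
    unfold Cf; rw [max_eq_right (le_trans huu' hu'v)]
  have e2 : Cf θ φ u' v = u' * v + θ v * φ u' * φ v := by
    unfold Cf; rw [max_eq_right hu'v]
  rw [e1, e2] at h2
  nlinarith [h2]

lemma P1 (hL : LTD θ φ) {u v v' : ℝ} (hu : 0 < u) (huv : u ≤ v) (hvv' : v ≤ v')
    (hv' : v' ≤ 1) : 0 ≤ φ u * (v' * (θ v * φ v) - v * (θ v' * φ v')) := by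
  have hv : 0 < v := lt_of_lt_of_le hu huv
  have hv'0 : 0 < v' := lt_of_lt_of_le hv hvv'
  have h := hL u ⟨hu.le, le_trans huv (le_trans hvv' hv')⟩
    ⟨hv, le_trans hvv' hv'⟩ ⟨hv'0, hv'⟩ hvv'
  have h2 : Cf θ φ v' u / v' ≤ Cf θ φ v u / v := h
  rw [div_le_div_iff₀ hv'0 hv] at h2
  have e1 : Cf θ φ v u = v * u + θ v * φ v * φ u := by
    unfold Cf; rw [max_eq_left huv]
  have e2 : Cf θ φ v' u = v' * u + θ v' * φ v' * φ u := by
    unfold Cf; rw [max_eq_left (le_trans huv hvv')]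
  rw [e1, e2] at h2
  nlinarith [h2]

set_option maxHeartbeats 1000000 in
lemma lemA (hC : IsCopula (Cf θ φ)) (hL : LTD θ φ) {s s' t t' : ℝ}
    (hs : 0 < s) (hss' : s ≤ s') (hs't : s' ≤ t) (htt' : t ≤ t') (ht' : t' ≤ 1) :
    0 ≤ (s' * φ s - s * φ s') * (t' * (θ t * φ t) - t * (θ t' * φ t')) := by
  have hs' : 0 < s' := lt_of_lt_of_le hs hss'
  have ht0 : 0 < t := lt_of_lt_of_le hs' hs't
  have ht'0 : 0 < t' := lt_of_lt_of_le ht0 htt'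
  set X := s' * φ s - s * φ s' with hX
  set Y := t' * (θ t * φ t) - t * (θ t' * φ t') with hY
  have F1 : 0 ≤ θ t * φ t * X := P2 hL hs hss' hs't (le_trans htt' ht')
  have F2 : 0 ≤ θ t' * φ t' * X := P2 hL hs hss' (le_trans hs't htt') ht'
  have F3 : 0 ≤ φ s * Y := P1 hL hs (le_trans hss' hs't) htt' ht'
  have F4 : 0 ≤ φ s' * Y := P1 hL hs' hs't htt' ht'
  have F5 : 0 ≤ θ t' * φ t' * (t' * φ s' - s' * φ t') :=
    P2 hL hs' (le_trans hs't htt') le_rfl ht'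
  have F6 : 0 ≤ θ t' * φ t' ^ 2 := L1 hC hL ht'0 ht'
  rcases lt_trichotomy X 0 with hXn | hX0 | hXp
  · rcases le_or_gt Y 0 with hYn | hYp
    · exact mul_nonneg_iff.mpr (Or.inr ⟨hXn.le, hYn⟩)
    · exfalso
      have h1 : θ t * φ t ≤ 0 := by nlinarith
      have h2 : θ t' * φ t' ≤ 0 := by nlinarith
      have h3 : θ t' * φ t' < 0 := by nlinarith [mul_nonpos_iff.mpr (Or.inl ⟨ht'0.le, h1⟩)]
      have h4 : 0 ≤ φ s := by nlinarith
      have h5 : 0 ≤ φ s' := by nlinarith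
      have h6 : 0 < φ s' := by nlinarith [mul_nonneg hs'.le h4]
      have h8 : t' * φ s' - s' * φ t' ≤ 0 := by
        by_contra hE; push_neg at hE
        nlinarith [mul_neg_of_neg_of_pos h3 hE]
      have h7 : 0 < φ t' := by nlinarith [mul_pos ht'0 h6]
      nlinarith [mul_neg_of_neg_of_pos h3 h7]
  · rw [hX0, zero_mul]
  · rcases le_or_gt 0 Y with hYn | hYp
    · exact mul_nonneg hXp.le hYn
    · exfalso
      have h1 : 0 ≤ θ t * φ t := by nlinarith
      have h2 : 0 ≤ θ t' * φ t' := by nlinarith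
      have h3 : 0 < θ t' * φ t' := by nlinarith [mul_nonneg ht'0.le h1]
      have h4 : φ s ≤ 0 := by nlinarith
      have h5 : φ s' ≤ 0 := by nlinarith
      have h6 : φ s' < 0 := by nlinarith [mul_nonpos_iff.mpr (Or.inl ⟨hs'.le, h4⟩)]
      have h8 : 0 ≤ t' * φ s' - s' * φ t' := by
        by_contra hE; push_neg at hE
        nlinarith [mul_neg_of_pos_of_neg h3 hE]
      have h7 : φ t' < 0 := by nlinarith [mul_neg_of_pos_of_neg ht'0 h6]
      nlinarith [mul_neg_of_pos_of_neg h3 h7]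

lemma slope_tendsto {f : ℝ → ℝ} {x : ℝ} (hf : HasDerivAt f (deriv f x) x) :
    Tendsto (fun h : ℝ => (f (x + h) - f x) / h) (𝓝[>] 0) (𝓝 (deriv f x)) := by
  have h1 : Tendsto (fun h : ℝ => x + h) (𝓝[>] (0:ℝ)) (𝓝[≠] x) := by
    apply tendsto_nhdsWithin_of_tendsto_nhds_of_eventually_within
    · have : Tendsto (fun h : ℝ => x + h) (𝓝 (0:ℝ)) (𝓝 (x + 0)) :=
        (continuous_const.add continuous_id).tendsto 0
      simpa using this.mono_left nhdsWithin_le_nhds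
    · filter_upwards [self_mem_nhdsWithin] with h (hh : (0:ℝ) < h)
      simp only [mem_compl_iff, mem_singleton_iff]
      intro hc
      nlinarith
  have h2 := (hasDerivAt_iff_tendsto_slope.1 hf).comp h1
  have h3 : (fun h : ℝ => slope f x (x + h)) = fun h : ℝ => (f (x + h) - f x) / h := by
    funext h
    simp [slope_def_field, add_sub_cancel_left]
  rw [← h3]
  exact h2

lemma theta_deriv_nonpos (hθ : ContDiffOn ℝ 1 θ (Set.Icc 0 1))
    (hφ : ContDiffOn ℝ 1 φ (Set.Icc 0 1)) (hC : IsCopula (Cf θ φ))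
    {x : ℝ} (hx : x ∈ Ioo (0:ℝ) 1) (hφx : φ x ≠ 0) : deriv θ x ≤ 0 := by
  have hxI : Icc (0:ℝ) 1 ∈ 𝓝 x := Icc_mem_nhds hx.1 hx.2
  have hθd : DifferentiableAt ℝ θ x :=
    ((hθ.differentiableOn one_ne_zero).differentiableAt hxI)
  have hφd : DifferentiableAt ℝ φ x :=
    ((hφ.differentiableOn one_ne_zero).differentiableAt hxI)
  have hsθ := slope_tendsto (f := θ) (x := x) hθd.hasDerivAt
  have hsφ := slope_tendsto (f := φ) (x := x) hφd.hasDerivAt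
  have haddt : Tendsto (fun h : ℝ => x + h) (𝓝[>] (0:ℝ)) (𝓝 x) := by
    have : Tendsto (fun h : ℝ => x + h) (𝓝 (0:ℝ)) (𝓝 (x + 0)) :=
      (continuous_const.add continuous_id).tendsto 0
    simpa using this.mono_left nhdsWithin_le_nhds
  have hcθ : Tendsto (fun h : ℝ => θ (x + h)) (𝓝[>] (0:ℝ)) (𝓝 (θ x)) :=
    (hθd.continuousAt.tendsto).comp haddt
  have hcφ : Tendsto (fun h : ℝ => φ (x + h) - φ x) (𝓝[>] (0:ℝ)) (𝓝 0) := by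
    have h0 : Tendsto (fun h : ℝ => φ (x + h)) (𝓝[>] (0:ℝ)) (𝓝 (φ x)) :=
      (hφd.continuousAt.tendsto).comp haddt
    have h1 : Tendsto (fun h : ℝ => φ (x + h) - φ x) (𝓝[>] (0:ℝ)) (𝓝 (φ x - φ x)) :=
      h0.sub tendsto_const_nhds
    simpa using h1
  have hid : Tendsto (fun h : ℝ => h) (𝓝[>] (0:ℝ)) (𝓝 0) :=
    tendsto_id.mono_left nhdsWithin_le_nhds
  set g : ℝ → ℝ := fun h =>
    h + θ (x + h) * ((φ (x + h) - φ x) / h) * (φ (x + h) - φ x)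
      + (-((θ (x + h) - θ x) / h)) * (φ x) ^ 2 with hg
  have htends : Tendsto g (𝓝[>] (0:ℝ))
      (𝓝 (0 + θ x * deriv φ x * 0 + (-(deriv θ x)) * (φ x) ^ 2)) := by
    apply Tendsto.add
    apply Tendsto.add hid
    · exact (hcθ.mul hsφ).mul hcφ
    · exact (hsθ.neg).mul tendsto_const_nhds
  have hev : ∀ᶠ h in 𝓝[>] (0:ℝ), 0 ≤ g h := by
    have hmem : Ioc (0:ℝ) (1 - x) ∈ 𝓝[>] (0:ℝ) :=
      Ioc_mem_nhdsGT_of_mem ⟨le_rfl, by linarith [hx.2]⟩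
    filter_upwards [hmem] with h hh
    obtain ⟨hh0, hh1⟩ := hh
    have hxh : x + h ≤ 1 := by linarith
    have V := hC.2.2 x (x + h) x (x + h) hx.1.le (by linarith) hxh hx.1.le (by linarith) hxh
    have e1 : max (x + h) (x + h) = x + h := max_self _
    have e2 : max (x + h) x = x + h := max_eq_left (by linarith)
    have e3 : max x (x + h) = x + h := max_eq_right (by linarith)
    have e4 : max x x = x := max_self _
    simp only [Cf, e1, e2, e3, e4] at V
    have hV : 0 ≤ (x+h)*(x+h) + θ (x+h) * φ (x+h) * φ (x+h)
        - ((x+h)*x + θ (x+h) * φ (x+h) * φ x)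
        - (x*(x+h) + θ (x+h) * φ x * φ (x+h))
        + (x*x + θ x * φ x * φ x) := by linarith [V]
    have hgh : g h * h = (x+h)*(x+h) + θ (x+h) * φ (x+h) * φ (x+h)
        - ((x+h)*x + θ (x+h) * φ (x+h) * φ x)
        - (x*(x+h) + θ (x+h) * φ x * φ (x+h))
        + (x*x + θ x * φ x * φ x) := by
      rw [hg]; field_simp; ring
    nlinarith [hV, hgh, hh0]
  have hlim : 0 ≤ 0 + θ x * deriv φ x * 0 + (-(deriv θ x)) * (φ x) ^ 2 :=
    ge_of_tendsto htends hev
  have hφ2 : 0 < (φ x) ^ 2 := by positivity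
  nlinarith [hlim, hφ2]

lemma theta_anti (hθ : ContDiffOn ℝ 1 θ (Set.Icc 0 1))
    (hφ : ContDiffOn ℝ 1 φ (Set.Icc 0 1)) (hC : IsCopula (Cf θ φ))
    (hφiso : ∀ u ∈ Set.Icc (0:ℝ) 1, φ u = 0 →
      ∃ ε > 0, ∀ x ∈ Set.Icc (0:ℝ) 1, x ≠ u → |x - u| < ε → φ x ≠ 0) :
    AntitoneOn θ (Icc (0:ℝ) 1) := by
  have hderiv : ∀ x ∈ Ioo (0:ℝ) 1, deriv θ x ≤ 0 := by
    intro x hx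
    by_cases hφx : φ x = 0
    · obtain ⟨ε, hε, hiso⟩ := hφiso x (Ioo_subset_Icc_self hx) hφx
      have h1 : ContinuousOn (derivWithin θ (Icc (0:ℝ) 1)) (Icc (0:ℝ) 1) :=
        hθ.continuousOn_derivWithin (uniqueDiffOn_Icc one_pos) le_rfl
      have h2 : EqOn (deriv θ) (derivWithin θ (Icc (0:ℝ) 1)) (Ioo (0:ℝ) 1) := by
        intro y hy
        exact (derivWithin_of_mem_nhds (Icc_mem_nhds hy.1 hy.2)).symm
      have hcont : ContinuousOn (deriv θ) (Ioo (0:ℝ) 1) :=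
        (h1.mono Ioo_subset_Icc_self).congr h2
      have hct : Tendsto (deriv θ) (𝓝[>] x) (𝓝 (deriv θ x)) :=
        ((hcont.continuousAt (Ioo_mem_nhds hx.1 hx.2)).tendsto).mono_left nhdsWithin_le_nhds
      have hev : ∀ᶠ y in 𝓝[>] x, deriv θ y ≤ 0 := by
        have hmem : Ioo x (min (x + ε) 1) ∈ 𝓝[>] x :=
          Ioo_mem_nhdsGT_of_mem ⟨le_rfl, lt_min (by linarith) hx.2⟩
        filter_upwards [hmem] with y hy
        have hy1 : y < 1 := lt_of_lt_of_le hy.2 (min_le_right _ _)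
        have hyε : y < x + ε := lt_of_lt_of_le hy.2 (min_le_left _ _)
        have hy0 : 0 < y := lt_trans hx.1 hy.1
        have hyI : y ∈ Ioo (0:ℝ) 1 := ⟨hy0, hy1⟩
        have hφy : φ y ≠ 0 := by
          apply hiso y ⟨hy0.le, hy1.le⟩ (ne_of_gt hy.1)
          rw [abs_sub_lt_iff]; constructor <;> linarith [hy.1]
        exact theta_deriv_nonpos hθ hφ hC hyI hφy
      exact le_of_tendsto hct hev
    · exact theta_deriv_nonpos hθ hφ hC hx hφx
  apply antitoneOn_of_deriv_nonpos (convex_Icc 0 1) hθ.continuousOn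
  · intro x hx
    rw [interior_Icc] at hx
    exact (((hθ.differentiableOn one_ne_zero).differentiableAt
      (Icc_mem_nhds hx.1 hx.2))).differentiableWithinAt
  · intro x hx
    rw [interior_Icc] at hx
    exact hderiv x hx

set_option maxHeartbeats 1600000 in
lemma sq_case (hθana : AntitoneOn θ (Icc (0:ℝ) 1)) (hC : IsCopula (Cf θ φ))
    (hL : LTD θ φ) {s t : ℝ} (hs : 0 < s) (hst : s ≤ t) (ht : t ≤ 1) :
    tp2 θ φ s t s t := by
  have ht0 : 0 < t := lt_of_lt_of_le hs hst
  have hP : 0 ≤ θ s * φ s ^ 2 := L1 hC hL hs (le_trans hst ht)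
  have hQ : 0 ≤ θ t * φ t ^ 2 := L1 hC hL ht0 ht
  have hθst : θ t ≤ θ s := hθana ⟨hs.le, le_trans hst ht⟩ ⟨ht0.le, ht⟩ hst
  have e11 : Cf θ φ s s = s * s + θ s * φ s ^ 2 := by
    unfold Cf; rw [max_self]; ring
  have e22 : Cf θ φ t t = t * t + θ t * φ t ^ 2 := by
    unfold Cf; rw [max_self]; ring
  have e12 : Cf θ φ s t = s * t + θ t * φ s * φ t := by
    unfold Cf; rw [max_eq_right hst]
  have e21 : Cf θ φ t s = s * t + θ t * φ s * φ t := by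
    unfold Cf; rw [max_eq_left hst]; ring
  set P := θ s * φ s ^ 2 with hPd
  set Q := θ t * φ t ^ 2 with hQd
  set R := θ t * φ s * φ t with hRd
  have hPQ : R ^ 2 ≤ P * Q := by
    by_cases hφt : φ t = 0
    · simp only [hRd, hPd, hQd, hφt]
      nlinarith [sq_nonneg (φ s), sq_nonneg (θ t)]
    · have hθt : 0 ≤ θ t := by
        have : 0 < φ t ^ 2 := by positivity
        nlinarith
      have key : P * Q - R ^ 2 = φ s ^ 2 * φ t ^ 2 * θ t * (θ s - θ t) := by
        rw [hPd, hQd, hRd]; ring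
      nlinarith [mul_nonneg (mul_nonneg (mul_nonneg (sq_nonneg (φ s)) (sq_nonneg (φ t))) hθt) (sub_nonneg.2 hθst)]
  unfold tp2
  rw [e11, e22, e12, e21]
  rcases le_or_gt R 0 with hR | hR
  · nlinarith [mul_nonneg (sq_nonneg s) hQ, mul_nonneg (sq_nonneg t) hP,
      mul_nonneg (mul_pos hs ht0).le (neg_nonneg.2 hR), hPQ]
  · have hA : 0 ≤ s^2*Q + t^2*P := by positivity
    have key : (2*s*t*R)^2 ≤ (s^2*Q + t^2*P)^2 := by
      nlinarith [sq_nonneg (s^2*Q - t^2*P),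
        mul_nonneg (mul_nonneg (sq_nonneg s) (sq_nonneg t)) (sub_nonneg.2 hPQ)]
    have h2 : 2*s*t*R ≤ s^2*Q + t^2*P := by
      nlinarith [key, hA, mul_pos (mul_pos (mul_pos two_pos hs) ht0) hR]
    nlinarith [hPQ, h2]

lemma case1 (hC : IsCopula (Cf θ φ)) (hL : LTD θ φ) {u₁ u₂ v₁ v₂ : ℝ}
    (h0 : 0 < u₁) (h12 : u₁ ≤ u₂) (h2v : u₂ ≤ v₁) (hv12 : v₁ ≤ v₂) (hv2 : v₂ ≤ 1) :
    tp2 θ φ u₁ u₂ v₁ v₂ := by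
  have hA := lemA hC hL h0 h12 h2v hv12 hv2
  unfold tp2 Cf
  rw [max_eq_right (le_trans h12 h2v), max_eq_right h2v,
    max_eq_right (le_trans (le_trans h12 h2v) hv12), max_eq_right (le_trans h2v hv12)]
  nlinarith [hA]

lemma case2 (hC : IsCopula (Cf θ φ)) (hL : LTD θ φ) {u₁ u₂ v₁ v₂ : ℝ}
    (h0 : 0 < v₁) (hv12 : v₁ ≤ v₂) (hv2u : v₂ ≤ u₁) (h12 : u₁ ≤ u₂) (hu2 : u₂ ≤ 1) :
    tp2 θ φ u₁ u₂ v₁ v₂ := by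
  have hA := lemA hC hL h0 hv12 hv2u h12 hu2
  unfold tp2 Cf
  rw [max_eq_left (le_trans hv2u h12), max_eq_left hv2u,
    max_eq_left (le_trans (le_trans hv12 hv2u) h12), max_eq_left (le_trans hv12 hv2u)]
  nlinarith [hA]

lemma compose_abs {a₁ a₂ b₁ b₂ c₁ c₂ : ℝ} (ha₁ : 0 ≤ a₁) (ha₂ : 0 ≤ a₂) (hb₁ : 0 ≤ b₁)
    (hc₁ : 0 ≤ c₁) (hc₂ : 0 ≤ c₂) (hab₁ : a₁ ≤ b₁) (hab₂ : a₂ ≤ b₂) (hb12 : b₁ ≤ b₂)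
    (T1 : a₂ * b₁ ≤ a₁ * b₂) (T2 : b₂ * c₁ ≤ b₁ * c₂) : a₂ * c₁ ≤ a₁ * c₂ := by
  rcases eq_or_lt_of_le hb₁ with hb₁0 | hb₁p
  · have hb₂ : 0 ≤ b₂ := le_trans hb₁ hb12
    have ha₁0 : a₁ = 0 := le_antisymm (hab₁.trans hb₁0.ge) ha₁
    have h0 : b₂ * c₁ ≤ 0 := by rw [← hb₁0] at T2; linarith [T2]
    have h00 : b₂ * c₁ = 0 := le_antisymm h0 (mul_nonneg hb₂ hc₁)
    rcases mul_eq_zero.1 h00 with hb₂0 | hc₁0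
    · have ha₂0 : a₂ = 0 := le_antisymm (by rw [hb₂0] at hab₂; exact hab₂) ha₂
      rw [ha₁0, ha₂0]; simp
    · rw [ha₁0, hc₁0]; simp [mul_nonneg ha₂]
  · have hb₂p : 0 < b₂ := lt_of_lt_of_le hb₁p hb12
    have h4 : (a₂ * b₁) * (b₂ * c₁) ≤ (a₁ * b₂) * (b₁ * c₂) :=
      mul_le_mul T1 T2 (mul_nonneg hb₂p.le hc₁) (mul_nonneg ha₁ hb₂p.le)
    have h5 : (a₂ * c₁) * (b₁ * b₂) ≤ (a₁ * c₂) * (b₁ * b₂) := by nlinarith [h4]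
    exact le_of_mul_le_mul_right h5 (mul_pos hb₁p hb₂p)

lemma tp2_swap {u₁ u₂ v₁ v₂ : ℝ} (h : tp2 θ φ u₁ u₂ v₁ v₂) : tp2 θ φ v₁ v₂ u₁ u₂ := by
  unfold tp2 at h ⊢
  rw [Cf_symm v₁ u₂, Cf_symm v₂ u₁, Cf_symm v₁ u₁, Cf_symm v₂ u₂]
  nlinarith [h]

lemma compose_u (hC : IsCopula (Cf θ φ)) {u₁ w u₂ v₁ v₂ : ℝ}
    (hu₁ : 0 ≤ u₁) (h1w : u₁ ≤ w) (hw2 : w ≤ u₂) (hu₂ : u₂ ≤ 1)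
    (hv₁ : 0 ≤ v₁) (hv12 : v₁ ≤ v₂) (hv₂ : v₂ ≤ 1)
    (T1 : tp2 θ φ u₁ w v₁ v₂) (T2 : tp2 θ φ w u₂ v₁ v₂) : tp2 θ φ u₁ u₂ v₁ v₂ := by
  have hw1 : w ≤ 1 := le_trans hw2 hu₂
  have hu₁1 : u₁ ≤ 1 := le_trans h1w hw1
  have hwm : w ∈ Icc (0:ℝ) 1 := ⟨le_trans hu₁ h1w, hw1⟩
  have hv₁m : v₁ ∈ Icc (0:ℝ) 1 := ⟨hv₁, le_trans hv12 hv₂⟩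
  have hv₂m : v₂ ∈ Icc (0:ℝ) 1 := ⟨le_trans hv₁ hv12, hv₂⟩
  have hu₁m : u₁ ∈ Icc (0:ℝ) 1 := ⟨hu₁, hu₁1⟩
  have hu₂m : u₂ ∈ Icc (0:ℝ) 1 := ⟨le_trans (le_trans hu₁ h1w) hw2, hu₂⟩
  exact compose_abs (Cf_nonneg hC hu₁m hv₁m) (Cf_nonneg hC hu₁m hv₂m)
    (Cf_nonneg hC hwm hv₁m) (Cf_nonneg hC hu₂m hv₁m) (Cf_nonneg hC hu₂m hv₂m)
    (Cf_mono_u hC hu₁ h1w hw1 hv₁m) (Cf_mono_u hC hu₁ h1w hw1 hv₂m)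
    (Cf_mono_v hC hv₁ hv12 hv₂ hwm) T1 T2

lemma compose_v (hC : IsCopula (Cf θ φ)) {u₁ u₂ v₁ w v₂ : ℝ}
    (hu₁ : 0 ≤ u₁) (hu12 : u₁ ≤ u₂) (hu₂ : u₂ ≤ 1)
    (hv₁ : 0 ≤ v₁) (h1w : v₁ ≤ w) (hw2 : w ≤ v₂) (hv₂ : v₂ ≤ 1)
    (T1 : tp2 θ φ u₁ u₂ v₁ w) (T2 : tp2 θ φ u₁ u₂ w v₂) : tp2 θ φ u₁ u₂ v₁ v₂ := by
  have := compose_u hC hv₁ h1w hw2 hv₂ hu₁ hu12 hu₂ (tp2_swap T1) (tp2_swap T2)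
  exact tp2_swap this

lemma main_le (hθana : AntitoneOn θ (Icc (0:ℝ) 1)) (hC : IsCopula (Cf θ φ))
    (hL : LTD θ φ) {u₁ u₂ v₁ v₂ : ℝ}
    (hu0 : 0 < u₁) (hu12 : u₁ ≤ u₂) (hu2 : u₂ ≤ 1)
    (hv0 : 0 < v₁) (hv12 : v₁ ≤ v₂) (hv2 : v₂ ≤ 1) (huv : u₁ ≤ v₁) :
    tp2 θ φ u₁ u₂ v₁ v₂ := by
  rcases le_total u₂ v₁ with h2v | hv2u
  · exact case1 hC hL hu0 hu12 h2v hv12 hv2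
  · rcases le_total u₂ v₂ with huv2 | hv2u2
    · apply compose_u hC hu0.le huv hv2u hu2 hv0.le hv12 hv2
      · exact case1 hC hL hu0 huv le_rfl hv12 hv2
      · apply compose_v hC hv0.le hv2u hu2 hv0.le hv2u huv2 hv2
        · exact sq_case hθana hC hL hv0 hv2u hu2
        · exact case1 hC hL hv0 hv2u le_rfl huv2 hv2
    · apply compose_u hC hu0.le huv hv2u hu2 hv0.le hv12 hv2
      · exact case1 hC hL hu0 huv le_rfl hv12 hv2
      · apply compose_u hC hv0.le hv12 hv2u2 hu2 hv0.le hv12 hv2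
        · exact sq_case hθana hC hL hv0 hv12 hv2
        · exact case2 hC hL hv0 hv12 le_rfl hv2u2 hu2

lemma main (hθana : AntitoneOn θ (Icc (0:ℝ) 1)) (hC : IsCopula (Cf θ φ))
    (hL : LTD θ φ) {u₁ u₂ v₁ v₂ : ℝ}
    (hu0 : 0 < u₁) (hu12 : u₁ ≤ u₂) (hu2 : u₂ ≤ 1)
    (hv0 : 0 < v₁) (hv12 : v₁ ≤ v₂) (hv2 : v₂ ≤ 1) :
    tp2 θ φ u₁ u₂ v₁ v₂ := by
  rcases le_total u₁ v₁ with huv | hvu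
  · exact main_le hθana hC hL hu0 hu12 hu2 hv0 hv12 hv2 huv
  · exact tp2_swap (main_le hθana hC hL hv0 hv12 hv2 hu0 hu12 hu2 hvu)

end Stmt9Aux

theorem stmt9 (θ φ : ℝ → ℝ)
    (hθ : ContDiffOn ℝ 1 θ (Set.Icc 0 1))
    (hφ : ContDiffOn ℝ 1 φ (Set.Icc 0 1))
    (hθne : ∃ u ∈ Set.Icc (0:ℝ) 1, θ u ≠ 0)
    (hφiso : ∀ u ∈ Set.Icc (0:ℝ) 1, φ u = 0 →
      ∃ ε > 0, ∀ x ∈ Set.Icc (0:ℝ) 1, x ≠ u → |x - u| < ε → φ x ≠ 0)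
    (hC : IsCopula (fun u v => u * v + θ (max u v) * φ u * φ v)) :
    (∀ u₁ u₂ v₁ v₂ : ℝ, 0 ≤ u₁ → u₁ ≤ u₂ → u₂ ≤ 1 → 0 ≤ v₁ → v₁ ≤ v₂ → v₂ ≤ 1 →
        (u₁ * v₁ + θ (max u₁ v₁) * φ u₁ * φ v₁) *
          (u₂ * v₂ + θ (max u₂ v₂) * φ u₂ * φ v₂) -
        (u₁ * v₂ + θ (max u₁ v₂) * φ u₁ * φ v₂) *
          (u₂ * v₁ + θ (max u₂ v₁) * φ u₂ * φ v₁) ≥ 0) ↔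
      (∀ v ∈ Set.Icc (0:ℝ) 1,
        AntitoneOn (fun u => (u * v + θ (max u v) * φ u * φ v) / u) (Set.Ioc 0 1)) := by
  have hC' : IsCopula (Stmt9Aux.Cf θ φ) := hC
  constructor
  · intro hT v hv a ha b hb hab
    have h := hT a b v 1 ha.1.le hab hb.2 hv.1 hv.2 le_rfl
    have e1 : b * 1 + θ (max b 1) * φ b * φ 1 = b :=
      (hC.2.1 b ⟨le_trans ha.1.le hab, hb.2⟩).1
    have e2 : a * 1 + θ (max a 1) * φ a * φ 1 = a :=
      (hC.2.1 a ⟨ha.1.le, ha.2⟩).1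
    rw [e1, e2] at h
    show (b * v + θ (max b v) * φ b * φ v) / b ≤ (a * v + θ (max a v) * φ a * φ v) / a
    rw [div_le_div_iff₀ hb.1 ha.1]
    nlinarith [h]
  · intro hL' u₁ u₂ v₁ v₂ h1 h2 h3 h4 h5 h6
    have hL : Stmt9Aux.LTD θ φ := hL'
    rcases eq_or_lt_of_le h1 with hu0 | hu0
    · have z1 : (0:ℝ) * v₁ + θ (max 0 v₁) * φ 0 * φ v₁ = 0 :=
        (hC.1 v₁ ⟨h4, h5.trans h6⟩).2
      have z2 : (0:ℝ) * v₂ + θ (max 0 v₂) * φ 0 * φ v₂ = 0 :=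
        (hC.1 v₂ ⟨h4.trans h5, h6⟩).2
      rw [← hu0, z1, z2]
      simp
    · rcases eq_or_lt_of_le h4 with hv0 | hv0
      · have z1 : u₁ * (0:ℝ) + θ (max u₁ 0) * φ u₁ * φ 0 = 0 :=
          (hC.1 u₁ ⟨h1, h2.trans h3⟩).1
        have z2 : u₂ * (0:ℝ) + θ (max u₂ 0) * φ u₂ * φ 0 = 0 :=
          (hC.1 u₂ ⟨h1.trans h2, h3⟩).1
        rw [← hv0, z1, z2]
        simp
      · have hθana : AntitoneOn θ (Icc (0:ℝ) 1) := Stmt9Aux.theta_anti hθ hφ hC' hφiso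
        have hm := Stmt9Aux.main hθana hC' hL hu0 h2 h3 hv0 h5 h6
        unfold Stmt9Aux.tp2 Stmt9Aux.Cf at hm
        linarith [hm]
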